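/- Let f : 2^E → ℝ be a monotone submodular function with f(∅) = 0, let O ⊆ E with |O| = k ≥ 1, and let r₁,…,r_k be a sequence with prefix sets R_i = {r₁,…,r_i}, R₀ = ∅, such that for every 1 ≤ i ≤ k, f(R_{i−1} ∪ {r_i}) − f(R_{i−1}) ≥ max_{o ∈ O} (f(R_{i−1} ∪ {o}) − f(R_{i−1})). Then f(R_k) ≥ (1 − (1 − 1/k)^k)·f(O) ≥ (1 − 1/e)·f(O). -/

import Mathlib

/-- Classical greedy guarantee: if each greedy increment dominates every
marginal gain of an element of `O`, then `f(R_k) ≥ (1-(1-1/k)^k) f(O) ≥ (1-1/e) f(O)`. -/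
theorem greedy_one_minus_inv_e {E : Type*} [DecidableEq E] (f : Finset E → ℝ)
    (hsub : ∀ S T : Finset E, f S + f T ≥ f (S ∪ T) + f (S ∩ T))
    (hmono : ∀ S T : Finset E, S ⊆ T → f S ≤ f T)
    (hnorm : f ∅ = 0)
    (k : ℕ) (hk : 1 ≤ k) (O : Finset E) (hO : O.card = k)
    (r : ℕ → E) (R : ℕ → Finset E) (hR : ∀ i, R i = (Finset.range i).image r)
    (hgain : ∀ i < k, ∀ x ∈ O,
      f (insert (r i) (R i)) - f (R i) ≥ f (insert x (R i)) - f (R i)) :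
    f (R k) ≥ (1 - (1 - 1 / (k : ℝ)) ^ k) * f O ∧
    (1 - (1 - 1 / (k : ℝ)) ^ k) * f O ≥ (1 - 1 / Real.exp 1) * f O := by
  have hk' : (1:ℝ) ≤ k := by exact_mod_cast hk
  have hkpos : (0:ℝ) < k := by linarith
  have key : ∀ S : Finset E, f O - f S ≤ ∑ o ∈ O, (f (insert o S) - f S) := by
    intro S
    have h1 : ∀ T : Finset E, f (S ∪ T) - f S ≤ ∑ o ∈ T, (f (insert o S) - f S) := by
      intro T
      induction T using Finset.induction with
      | empty => simp
      | @insert a T ha ih =>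
        rw [Finset.sum_insert ha]
        have hs := hsub (S ∪ T) (insert a S)
        have hun : (S ∪ T) ∪ insert a S = insert a (S ∪ T) := by
          ext x; simp; tauto
        have hin : S ⊆ (S ∪ T) ∩ insert a S := by
          intro x hx; simp [hx]
        have hm := hmono S ((S ∪ T) ∩ insert a S) hin
        have heq : S ∪ insert a T = insert a (S ∪ T) := by
          ext x; simp
        rw [heq]
        rw [hun] at hs
        linarith
    calc f O - f S ≤ f (S ∪ O) - f S := by
          have := hmono O (S ∪ O) Finset.subset_union_right; linarith
      _ ≤ _ := h1 O
  have hO0 : 0 ≤ f O := by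
    have := hmono ∅ O (Finset.empty_subset O); rw [hnorm] at this; linarith
  have hR0 : f (R 0) = 0 := by rw [hR]; simpa using hnorm
  have hkinv : (1/(k:ℝ)) * k = 1 := by field_simp
  have hstep : ∀ i < k, f O - f (R (i+1)) ≤ (1 - 1/(k:ℝ)) * (f O - f (R i)) := by
    intro i hi
    have hins : R (i+1) = insert (r i) (R i) := by
      rw [hR, hR, Finset.range_add_one, Finset.image_insert]
    have hsum := key (R i)
    have hbound : ∑ o ∈ O, (f (insert o (R i)) - f (R i))
        ≤ (k:ℝ) * (f (insert (r i) (R i)) - f (R i)) := by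
      calc ∑ o ∈ O, (f (insert o (R i)) - f (R i))
          ≤ ∑ _o ∈ O, (f (insert (r i) (R i)) - f (R i)) :=
            Finset.sum_le_sum (fun x hx => hgain i hi x hx)
        _ = (k:ℝ) * (f (insert (r i) (R i)) - f (R i)) := by
            rw [Finset.sum_const, nsmul_eq_mul, hO]
    have h1 : f O - f (R i) ≤ (k:ℝ) * (f (insert (r i) (R i)) - f (R i)) :=
      le_trans hsum hbound
    have h2 : (f O - f (R i)) / k ≤ f (insert (r i) (R i)) - f (R i) := by
      rw [div_le_iff₀ hkpos]; nlinarith [h1]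
    have h3 : (1 - 1/(k:ℝ)) * (f O - f (R i))
        = (f O - f (R i)) - (f O - f (R i)) / k := by
      field_simp
    rw [hins, h3]
    linarith
  have hnn : (0:ℝ) ≤ 1 - 1/(k:ℝ) := by
    have : 1/(k:ℝ) ≤ 1 := by rw [div_le_one hkpos]; exact hk'
    linarith
  have hmain : ∀ n ≤ k, f O - f (R n) ≤ (1 - 1/(k:ℝ))^n * f O := by
    intro n hn
    induction n with
    | zero => simp [hR0]
    | succ m ih =>
      have hm : m ≤ k := Nat.le_of_succ_le hn
      have h1 := hstep m (Nat.lt_of_succ_le hn)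
      have h2 := ih hm
      calc f O - f (R (m+1)) ≤ (1 - 1/(k:ℝ)) * (f O - f (R m)) := h1
        _ ≤ (1 - 1/(k:ℝ)) * ((1 - 1/(k:ℝ))^m * f O) :=
            mul_le_mul_of_nonneg_left h2 hnn
        _ = (1 - 1/(k:ℝ))^(m+1) * f O := by ring
  have hfin := hmain k le_rfl
  constructor
  · linarith
  · have hle : (1 - 1/(k:ℝ))^k ≤ 1 / Real.exp 1 := by
      have h1 : (1 - 1/(k:ℝ)) ≤ Real.exp (-(1/(k:ℝ))) := by
        have := Real.add_one_le_exp (-(1/(k:ℝ)))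
        linarith
      have h2 : (1 - 1/(k:ℝ))^k ≤ Real.exp (-(1/(k:ℝ)))^k :=
        pow_le_pow_left₀ hnn h1 k
      have h3 : Real.exp (-(1/(k:ℝ)))^k = Real.exp (-1) := by
        rw [← Real.exp_nat_mul]
        congr 1
        field_simp
      rw [h3, Real.exp_neg] at h2
      simpa [one_div] using h2
    nlinarith [mul_nonneg (sub_nonneg.mpr hle) hO0]
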